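/- Let p, q be coprime positive integers with q > 2p, and let σ be the permutation of {1,...,q} given by the over-twist pattern Γ_{r,p/q}. If 0 < r < q − 2p, then the map i ↦ σ(i) on {1,...,q} changes monotonicity direction exactly twice (i.e., {1,...,q} decomposes into exactly 3 maximal intervals on which σ is monotone), so the pattern is bimodal. If r = 0 or r = q − 2p, then σ changes direction exactly once, so the pattern is unimodal. -/

import Mathlib

/-- The over-twist pattern `Γ_{r,p/q}` is bimodal (two direction
changes of `i ↦ σ i`) when `0 < r < q - 2p`, and unimodal (one direction
change) when `r = 0` or `r = q - 2p`. -/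
theorem overtwist_sigma_modality
    (p q r : ℕ) (hp : 0 < p) (hq : 0 < q) (h2p : 2 * p < q)
    (hr : r ≤ q - 2 * p) (hcop : Nat.gcd p q = 1)
    (σ : ℕ → ℕ)
    (h1 : ∀ i, 1 ≤ i → i ≤ r → σ i = i + p)
    (h2 : ∀ i, 1 ≤ i → i ≤ p → σ (r + i) = q - i + 1)
    (h3 : ∀ i, 1 ≤ i → i ≤ p → σ (r + p + i) = p - i + 1)
    (h4 : ∀ i, 1 ≤ i → i ≤ q - 2 * p - r → σ (r + 2 * p + i) = r + p + i) :
    (0 < r ∧ r < q - 2 * p →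
      {i | 2 ≤ i ∧ i ≤ q - 1 ∧
        ((σ i : ℤ) - (σ (i - 1) : ℤ)) * ((σ (i + 1) : ℤ) - (σ i : ℤ)) < 0}.ncard = 2) ∧
    (r = 0 ∨ r = q - 2 * p →
      {i | 2 ≤ i ∧ i ≤ q - 1 ∧
        ((σ i : ℤ) - (σ (i - 1) : ℤ)) * ((σ (i + 1) : ℤ) - (σ i : ℤ)) < 0}.ncard = 1) := by
  -- Sign of consecutive differences in the three monotone zones.
  have hdpos1 : ∀ i, 1 ≤ i → i ≤ r → (0 : ℤ) < (σ (i + 1) : ℤ) - σ i := by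
    intro i hi1 hi2
    have e1 : σ i = i + p := h1 i hi1 hi2
    rcases lt_or_eq_of_le hi2 with h | h
    · have e2 : σ (i + 1) = i + 1 + p := h1 (i + 1) (by omega) (by omega)
      rw [e1, e2]; omega
    · have e2 : σ (i + 1) = q - 1 + 1 := by
        have := h2 1 le_rfl hp
        rwa [show r + 1 = i + 1 by omega] at this
      rw [e1, e2]; omega
  have hdneg : ∀ i, r + 1 ≤ i → i + 1 ≤ r + 2 * p →
      (σ (i + 1) : ℤ) - σ i < 0 := by
    intro i hi1 hi2
    rcases le_or_gt i (r + p) with h | h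
    · have e1 : σ i = q - (i - r) + 1 := by
        have := h2 (i - r) (by omega) (by omega)
        rwa [show r + (i - r) = i by omega] at this
      rcases lt_or_eq_of_le h with h' | h'
      · have e2 : σ (i + 1) = q - (i + 1 - r) + 1 := by
          have := h2 (i + 1 - r) (by omega) (by omega)
          rwa [show r + (i + 1 - r) = i + 1 by omega] at this
        rw [e1, e2]; omega
      · have e2 : σ (i + 1) = p - 1 + 1 := by
          have := h3 1 le_rfl hp
          rwa [show r + p + 1 = i + 1 by omega] at this
        rw [e1, e2]; omega
    · have e1 : σ i = p - (i - (r + p)) + 1 := by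
        have := h3 (i - (r + p)) (by omega) (by omega)
        rwa [show r + p + (i - (r + p)) = i by omega] at this
      have e2 : σ (i + 1) = p - (i + 1 - (r + p)) + 1 := by
        have := h3 (i + 1 - (r + p)) (by omega) (by omega)
        rwa [show r + p + (i + 1 - (r + p)) = i + 1 by omega] at this
      rw [e1, e2]; omega
  have hdpos2 : ∀ i, r + 2 * p ≤ i → i ≤ q - 1 →
      (0 : ℤ) < (σ (i + 1) : ℤ) - σ i := by
    intro i hi1 hi2
    rcases eq_or_lt_of_le hi1 with h | h
    · have e1 : σ i = p - p + 1 := by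
        have := h3 p hp le_rfl
        rwa [show r + p + p = i by omega] at this
      have e2 : σ (i + 1) = r + p + 1 := by
        have := h4 1 le_rfl (by omega)
        rwa [show r + 2 * p + 1 = i + 1 by omega] at this
      rw [e1, e2]; omega
    · have e1 : σ i = r + p + (i - (r + 2 * p)) := by
        have := h4 (i - (r + 2 * p)) (by omega) (by omega)
        rwa [show r + 2 * p + (i - (r + 2 * p)) = i by omega] at this
      have e2 : σ (i + 1) = r + p + (i + 1 - (r + 2 * p)) := by
        have := h4 (i + 1 - (r + 2 * p)) (by omega) (by omega)
        rwa [show r + 2 * p + (i + 1 - (r + 2 * p)) = i + 1 by omega] at this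
      rw [e1, e2]; omega
  -- Characterization of direction-change indices.
  have key : ∀ i, 2 ≤ i → i ≤ q - 1 →
      (((σ i : ℤ) - σ (i - 1)) * ((σ (i + 1) : ℤ) - σ i) < 0 ↔
        (i = r + 1 ∧ 1 ≤ r) ∨ (i = r + 2 * p ∧ r + 2 * p + 1 ≤ q)) := by
    intro i h2i hiq
    have hi1 : i - 1 + 1 = i := by omega
    constructor
    · intro hprod
      rcases le_or_gt i r with hc | hc
      · have a := hdpos1 (i - 1) (by omega) (by omega)
        rw [hi1] at a
        have b := hdpos1 i (by omega) hc
        exact absurd hprod (by have := mul_pos a b; linarith)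
      rcases le_or_gt (i + 1) (r + 2 * p) with hc2 | hc2
      · rcases eq_or_lt_of_le (show r + 1 ≤ i from hc) with h | h
        · exact Or.inl ⟨by omega, by omega⟩
        · have a := hdneg (i - 1) (by omega) (by omega)
          rw [hi1] at a
          have b := hdneg i (by omega) hc2
          exact absurd hprod (by have := mul_pos_of_neg_of_neg a b; linarith)
      rcases eq_or_lt_of_le (show r + 2 * p ≤ i by omega) with h | h
      · exact Or.inr ⟨h.symm, by omega⟩
      · have a := hdpos2 (i - 1) (by omega) (by omega)
        rw [hi1] at a
        have b := hdpos2 i (by omega) hiq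
        exact absurd hprod (by have := mul_pos a b; linarith)
    · rintro (⟨rfl, hr1⟩ | ⟨rfl, hlt⟩)
      · have a := hdpos1 r hr1 le_rfl
        have b := hdneg (r + 1) le_rfl (by omega)
        rw [show r + 1 - 1 = r by omega]
        exact mul_neg_of_pos_of_neg a b
      · have a := hdneg (r + 2 * p - 1) (by omega) (by omega)
        rw [show r + 2 * p - 1 + 1 = r + 2 * p by omega] at a
        have b := hdpos2 (r + 2 * p) le_rfl (by omega)
        exact mul_neg_of_neg_of_pos a b
  have hS : {i | 2 ≤ i ∧ i ≤ q - 1 ∧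
        ((σ i : ℤ) - (σ (i - 1) : ℤ)) * ((σ (i + 1) : ℤ) - (σ i : ℤ)) < 0} =
      {i | (i = r + 1 ∧ 1 ≤ r) ∨ (i = r + 2 * p ∧ r + 2 * p + 1 ≤ q)} := by
    ext i
    simp only [Set.mem_setOf_eq]
    constructor
    · rintro ⟨a, b, c⟩
      exact (key i a b).1 c
    · intro h
      have h2i : 2 ≤ i := by omega
      have hb : i ≤ q - 1 := by omega
      exact ⟨h2i, hb, (key i h2i hb).2 h⟩
  constructor
  · rintro ⟨hr0, hrlt⟩
    have heq : {i | (i = r + 1 ∧ 1 ≤ r) ∨ (i = r + 2 * p ∧ r + 2 * p + 1 ≤ q)} =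
        ({r + 1, r + 2 * p} : Set ℕ) := by
      ext i
      simp only [Set.mem_setOf_eq, Set.mem_insert_iff, Set.mem_singleton_iff]
      omega
    rw [hS, heq, Set.ncard_pair (by omega)]
  · rintro (rfl | hre)
    · have heq : {i | (i = 0 + 1 ∧ 1 ≤ 0) ∨ (i = 0 + 2 * p ∧ 0 + 2 * p + 1 ≤ q)} =
          ({0 + 2 * p} : Set ℕ) := by
        ext i
        simp only [Set.mem_setOf_eq, Set.mem_singleton_iff]
        omega
      rw [hS, heq, Set.ncard_singleton]
    · have heq : {i | (i = r + 1 ∧ 1 ≤ r) ∨ (i = r + 2 * p ∧ r + 2 * p + 1 ≤ q)} =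
          ({r + 1} : Set ℕ) := by
        ext i
        simp only [Set.mem_setOf_eq, Set.mem_singleton_iff]
        omega
      rw [hS, heq, Set.ncard_singleton]
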